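/- Let u = p/q with p, q positive coprime integers such that both p* and q* are odd. Then limsup_{t → +∞} |μ̂_u(t)| > 0; in particular μ̂_u(t) does not tend to 0 as t → ∞, and μ_u is singular with respect to Lebesgue measure. -/

import Mathlib

open MeasureTheory Filter

/-- The product of Bernoulli(1/2) measures on `{0,1}^ℕ`, realized as the joint law of
the binary digits of a uniform random point of `[0,1)` (these digits are i.i.d.
Bernoulli(1/2), so this is exactly the infinite product of Bernoulli(1/2) measures). -/
noncomputable def bernoulliProd : Measure (ℕ → Bool) :=
  Measure.map (fun x j => decide (⌊x * 2 ^ (j + 1)⌋ % 2 = 1))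
    (volume.restrict (Set.Ico (0 : ℝ) 1))

/-- `μ_u`: the pushforward of the product of Bernoulli(1/2) measures on `({0,1}^ℕ)²`
under `(ε, ε') ↦ ∑_{j=1}^∞ (ε_j + u·ε'_j)·4^{-j}`. -/
noncomputable def muBes (u : ℝ) : Measure ℝ :=
  Measure.map
    (fun εε' : (ℕ → Bool) × (ℕ → Bool) =>
      ∑' j : ℕ, ((if εε'.1 j then (1 : ℝ) else 0) + u * (if εε'.2 j then (1 : ℝ) else 0))
        / 4 ^ (j + 1))
    (bernoulliProd.prod bernoulliProd)

/-- The Fourier transform `μ̂(t) = ∫ e^{itx} dμ(x)` of a measure on `ℝ`. -/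
noncomputable def fourierMeasure (μ : Measure ℝ) (t : ℝ) : ℂ :=
  ∫ x, Complex.exp (Complex.I * t * x) ∂μ

/-- `n* `: the first nonzero digit from the right of `n` in base `b`,
i.e. `(n / b^{j*}) % b` where `j*` is the largest `j` with `b^j ∣ n`. -/
def fstDigit (b n : ℕ) : ℕ := n / b ^ padicValNat b n % b

namespace BesAux

open Complex Set
open scoped Real ENNReal NNReal Topology

noncomputable section

/-- the binary digit map -/
def D : ℝ → ℕ → Bool := fun x j => decide (⌊x * 2 ^ (j + 1)⌋ % 2 = 1)

lemma measurable_D : Measurable D :=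
  measurable_pi_lambda _ fun j =>
    (measurable_of_countable (fun n : ℤ => decide (n % 2 = 1))).comp
      (measurable_id.mul_const _).floor

lemma bernoulliProd_eq : bernoulliProd = Measure.map D (volume.restrict (Set.Ico (0:ℝ) 1)) := rfl

instance : IsProbabilityMeasure (volume.restrict (Set.Ico (0:ℝ) 1)) := by
  constructor
  rw [Measure.restrict_apply_univ, Real.volume_Ico]
  norm_num

instance : IsProbabilityMeasure bernoulliProd := by
  rw [bernoulliProd_eq]
  exact Measure.isProbabilityMeasure_map measurable_D.aemeasurable

/-- prepend a digit -/
def cons (b : Bool) (ε : ℕ → Bool) : ℕ → Bool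
  | 0 => b
  | k+1 => ε k

lemma measurable_cons (b : Bool) : Measurable (cons b) :=
  measurable_pi_lambda _ fun j => by
    cases j with
    | zero => exact measurable_const
    | succ k => exact measurable_pi_apply k


def e : Bool → ℝ
  | false => 0
  | true => 1

def hmap (b : Bool) : ℝ → ℝ := fun x => (x + e b) / 2

lemma measurable_hmap (b : Bool) : Measurable (hmap b) :=
  (measurable_id.add_const _).div_const 2

lemma D_hmap (b : Bool) {x : ℝ} (hx : x ∈ Ico (0:ℝ) 1) : D (hmap b x) = cons b (D x) := by
  funext j
  cases j with
  | zero =>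
    cases b with
    | false =>
      have h1 : (x + e false) / 2 * 2 ^ (0+1) = x := by simp [e]
      simp only [D, hmap, cons, h1]
      have : ⌊x⌋ = 0 := Int.floor_eq_zero_iff.2 hx
      simp [this]
    | true =>
      have h1 : (x + e true) / 2 * 2 ^ (0+1) = x + 1 := by simp only [e]; ring
      simp only [D, hmap, cons, h1]
      have h2 : ⌊x + 1⌋ = 1 := by
        have h0 : ⌊x⌋ = 0 := Int.floor_eq_zero_iff.2 hx
        rw [show (1:ℝ) = ((1:ℤ):ℝ) by norm_num, Int.floor_add_intCast, h0]; norm_num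
      simp [h2]
  | succ k =>
    cases b with
    | false =>
      have h1 : (x + e false) / 2 * 2 ^ (k+1+1) = x * 2 ^ (k+1) := by
        simp [e]; ring
      simp only [D, hmap, cons, h1]
    | true =>
      have h1 : (x + e true) / 2 * 2 ^ (k+1+1) = x * 2 ^ (k+1) + ((2^(k+1) : ℤ) : ℝ) := by
        simp [e]; push_cast; ring
      simp only [D, hmap, cons, h1, Int.floor_add_intCast]
      have hdvd : (2:ℤ) ∣ 2^(k+1) := dvd_pow_self 2 (Nat.succ_ne_zero k)
      have h2 : (⌊x * 2^(k+1)⌋ + 2^(k+1)) % 2 = ⌊x * 2^(k+1)⌋ % 2 := by omega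
      simp [h2]

def Ib : Bool → Set ℝ
  | false => Ico (0:ℝ) 2⁻¹
  | true => Ico (2⁻¹:ℝ) 1

lemma bernoulliProd_piece (b : Bool) :
    (2⁻¹ : ℝ≥0∞) • Measure.map (cons b) bernoulliProd
      = Measure.map D (volume.restrict (Ib b)) := by
  have hpre : hmap b ⁻¹' (Ib b) = Ico (0:ℝ) 1 := by
    ext x
    cases b <;>
      · simp only [hmap, Ib, e, mem_preimage, mem_Ico]
        constructor <;> intro h <;> exact ⟨by linarith [h.1, h.2], by linarith [h.1, h.2]⟩
  have hvol : Measure.map (hmap b) volume = ENNReal.ofReal 2 • volume := by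
    have h1 : hmap b = (fun y : ℝ => y * 2⁻¹) ∘ (fun x : ℝ => x + e b) := by
      funext x; simp [hmap, div_eq_mul_inv]
    rw [h1, ← Measure.map_map (measurable_id'.mul_const 2⁻¹ : Measurable fun y : ℝ => y * 2⁻¹)
      (measurable_id'.add_const (e b) : Measurable fun x : ℝ => x + e b),
      map_add_right_eq_self volume (e b),
      Real.map_volume_mul_right (by norm_num : (2⁻¹:ℝ) ≠ 0)]
    norm_num
  have step : Measure.map (cons b) bernoulliProd
      = Measure.map D (Measure.map (hmap b) (volume.restrict (Ico (0:ℝ) 1))) := by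
    rw [bernoulliProd_eq, Measure.map_map (measurable_cons b) measurable_D,
      Measure.map_map measurable_D (measurable_hmap b)]
    apply Measure.map_congr
    exact (ae_restrict_iff' measurableSet_Ico).2
      (Filter.Eventually.of_forall fun x hx => (D_hmap b hx).symm)
  have hres : Measure.map (hmap b) (volume.restrict (Ico (0:ℝ) 1))
      = (Measure.map (hmap b) volume).restrict (Ib b) := by
    rw [Measure.restrict_map (measurable_hmap b) (by cases b <;> exact measurableSet_Ico), hpre]
  rw [step, hres, hvol, Measure.restrict_smul, Measure.map_smul, smul_smul,
    show ENNReal.ofReal 2 = (2:ℝ≥0∞) by norm_num,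
    ENNReal.inv_mul_cancel (by norm_num) (by norm_num), one_smul]

lemma bernoulliProd_split :
    bernoulliProd = (2⁻¹ : ℝ≥0∞) • (Measure.map (cons false) bernoulliProd)
      + (2⁻¹ : ℝ≥0∞) • (Measure.map (cons true) bernoulliProd) := by
  rw [bernoulliProd_piece false, bernoulliProd_piece true,
    ← Measure.map_add _ _ measurable_D, Ib, Ib,
    ← Measure.restrict_union (by apply Set.disjoint_left.2; rintro x hx hx2; exact absurd hx2.1 (not_le.2 hx.2)) measurableSet_Ico,
    Set.Ico_union_Ico_eq_Ico (by norm_num) (by norm_num), bernoulliProd_eq]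

section Prod
variable {X Y : Type*} [MeasurableSpace X] [MeasurableSpace Y]

lemma prod_smul_left (c : ℝ≥0∞) (μ : Measure X) (ν : Measure Y) [SFinite ν] :
    (c • μ).prod ν = c • (μ.prod ν) := by
  ext s hs
  rw [Measure.smul_apply, Measure.prod_apply hs, Measure.prod_apply hs,
    lintegral_smul_measure]

lemma prod_smul_right (c : ℝ≥0∞) (hc : c ≠ ⊤) (μ : Measure X) (ν : Measure Y) [SFinite ν] :
    μ.prod (c • ν) = c • (μ.prod ν) := by
  ext s hs
  simp only [Measure.smul_apply, Measure.prod_apply hs, smul_eq_mul]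
  exact lintegral_const_mul' _ _ hc

end Prod

def pm (a b : Bool) : (ℕ → Bool) × (ℕ → Bool) → (ℕ → Bool) × (ℕ → Bool) :=
  Prod.map (cons a) (cons b)

lemma measurable_pm (a b : Bool) : Measurable (pm a b) :=
  Measurable.prodMap (measurable_cons a) (measurable_cons b)

lemma prod_split :
    bernoulliProd.prod bernoulliProd
      = (4⁻¹ : ℝ≥0∞) • (Measure.map (pm false false) (bernoulliProd.prod bernoulliProd)
        + Measure.map (pm true false) (bernoulliProd.prod bernoulliProd)
        + Measure.map (pm false true) (bernoulliProd.prod bernoulliProd)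
        + Measure.map (pm true true) (bernoulliProd.prod bernoulliProd)) := by
  have hmapmeas : ∀ b : Bool, Measurable (cons b) := measurable_cons
  have hfin : ∀ b : Bool, IsProbabilityMeasure (Measure.map (cons b) bernoulliProd) :=
    fun b => Measure.isProbabilityMeasure_map (hmapmeas b).aemeasurable
  haveI := hfin false; haveI := hfin true
  have hterm : ∀ a b : Bool,
      (Measure.map (cons a) bernoulliProd).prod (Measure.map (cons b) bernoulliProd)
        = Measure.map (pm a b) (bernoulliProd.prod bernoulliProd) :=
    fun a b => Measure.map_prod_map _ _ (hmapmeas a) (hmapmeas b)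
  have h22 : (2⁻¹ : ℝ≥0∞) * 2⁻¹ = 4⁻¹ := by
    rw [← ENNReal.mul_inv (Or.inl (by norm_num)) (Or.inl (by norm_num))]
    norm_num
  haveI : SFinite ((2⁻¹ : ℝ≥0∞) • (Measure.map (cons false) bernoulliProd)
      + (2⁻¹ : ℝ≥0∞) • (Measure.map (cons true) bernoulliProd)) := by
    rw [← bernoulliProd_split]; infer_instance
  conv_lhs => rw [bernoulliProd_split]
  rw [Measure.prod_add, Measure.add_prod, Measure.add_prod,
    prod_smul_left, prod_smul_left, prod_smul_left, prod_smul_left,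
    prod_smul_right _ (by norm_num), prod_smul_right _ (by norm_num),
    prod_smul_right _ (by norm_num), prod_smul_right _ (by norm_num),
    hterm, hterm, hterm, hterm, smul_smul, smul_smul, smul_smul, smul_smul, h22,
    smul_add, smul_add, smul_add]
  abel

def Smap (u : ℝ) : (ℕ → Bool) × (ℕ → Bool) → ℝ := fun εε' =>
  ∑' j : ℕ, ((if εε'.1 j then (1 : ℝ) else 0) + u * (if εε'.2 j then (1 : ℝ) else 0))
    / 4 ^ (j + 1)

lemma muBes_def (u : ℝ) : muBes u = Measure.map (Smap u) (bernoulliProd.prod bernoulliProd) := rfl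

lemma summable_term (u : ℝ) (f g : ℕ → Bool) :
    Summable (fun j : ℕ => ((if f j then (1 : ℝ) else 0) + u * (if g j then (1 : ℝ) else 0))
      / 4 ^ (j + 1)) := by
  apply Summable.of_norm_bounded (g := fun j : ℕ => (1 + |u|) * (4⁻¹ : ℝ) ^ j)
  · exact (summable_geometric_of_lt_one (by norm_num) (by norm_num)).mul_left _
  · intro j
    have h1 : |((if f j then (1 : ℝ) else 0) + u * (if g j then (1 : ℝ) else 0))| ≤ 1 + |u| := by
      have ha : |if f j then (1:ℝ) else 0| ≤ 1 := by split <;> norm_num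
      have hb : |u * if g j then (1:ℝ) else 0| ≤ |u| := by
        rw [abs_mul]
        calc |u| * |if g j then (1:ℝ) else 0| ≤ |u| * 1 :=
              mul_le_mul_of_nonneg_left (by split <;> norm_num) (abs_nonneg u)
          _ = |u| := mul_one _
      exact (abs_add_le _ _).trans (add_le_add ha hb)
    have h2 : ((4:ℝ) ^ (j+1))⁻¹ ≤ (4⁻¹ : ℝ) ^ j := by
      rw [← inv_pow]
      apply pow_le_pow_of_le_one (by norm_num) (by norm_num) (by omega)
    rw [norm_div, Real.norm_eq_abs, Real.norm_eq_abs, abs_of_pos (by positivity : (0:ℝ) < 4 ^ (j+1)),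
      div_eq_mul_inv]
    exact mul_le_mul h1 h2 (by positivity) (by positivity)

lemma measurable_Smap (u : ℝ) : Measurable (Smap u) := by
  apply measurable_of_tendsto_metrizable
    (f := fun n εε' => ∑ j ∈ Finset.range n,
      ((if εε'.1 j then (1 : ℝ) else 0) + u * (if εε'.2 j then (1 : ℝ) else 0)) / 4 ^ (j + 1))
  · intro n
    apply Finset.measurable_sum
    intro j _
    apply Measurable.div_const
    apply Measurable.add
    · exact (measurable_of_countable (fun b : Bool => if b then (1:ℝ) else 0)).comp
        ((measurable_pi_apply j).comp measurable_fst)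
    · exact ((measurable_of_countable (fun b : Bool => u * if b then (1:ℝ) else 0)).comp
        ((measurable_pi_apply j).comp measurable_snd))
  · rw [tendsto_pi_nhds]
    intro εε'
    exact (summable_term u εε'.1 εε'.2).hasSum.tendsto_sum_nat

instance : IsProbabilityMeasure (muBes u) := by
  rw [muBes_def]
  exact Measure.isProbabilityMeasure_map (measurable_Smap u).aemeasurable

def φm (d : ℝ) : ℝ → ℝ := fun x => (x + d) / 4

lemma measurable_φm (d : ℝ) : Measurable (φm d) := (measurable_id.add_const _).div_const 4

def eb (b : Bool) : ℝ := if b then 1 else 0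

lemma Smap_comp (u : ℝ) (a b : Bool) (εε' : (ℕ → Bool) × (ℕ → Bool)) :
    Smap u (pm a b εε') = (Smap u εε' + (eb a + u * eb b)) / 4 := by
  obtain ⟨ε, ε'⟩ := εε'
  have hsum : Summable (fun j : ℕ =>
      ((if cons a ε j then (1 : ℝ) else 0) + u * (if cons b ε' j then (1 : ℝ) else 0))
        / 4 ^ (j + 1)) := summable_term u (cons a ε) (cons b ε')
  show (∑' j : ℕ, ((if cons a ε j then (1 : ℝ) else 0) + u * (if cons b ε' j then (1 : ℝ) else 0))
        / 4 ^ (j + 1)) = _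
  rw [Summable.tsum_eq_zero_add hsum]
  have h0 : ((if cons a ε 0 then (1 : ℝ) else 0) + u * (if cons b ε' 0 then (1 : ℝ) else 0))
      / 4 ^ (0 + 1) = (eb a + u * eb b) / 4 := by
    simp [cons, eb]
    cases a <;> cases b <;> simp
  have h1 : ∀ k : ℕ,
      ((if cons a ε (k+1) then (1 : ℝ) else 0) + u * (if cons b ε' (k+1) then (1 : ℝ) else 0))
        / 4 ^ (k + 1 + 1)
      = (((if ε k then (1 : ℝ) else 0) + u * (if ε' k then (1 : ℝ) else 0)) / 4 ^ (k+1)) / 4 := by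
    intro k
    simp only [cons]
    rw [div_div, ← pow_succ]; rfl
  rw [h0]
  calc (eb a + u * eb b) / 4 + ∑' k : ℕ,
        ((if cons a ε (k+1) then (1 : ℝ) else 0) + u * (if cons b ε' (k+1) then (1 : ℝ) else 0))
          / 4 ^ (k + 1 + 1)
      = (eb a + u * eb b) / 4 + ∑' k : ℕ,
        (((if ε k then (1 : ℝ) else 0) + u * (if ε' k then (1 : ℝ) else 0)) / 4 ^ (k+1)) / 4 := by
        congr 1; exact tsum_congr h1
    _ = (eb a + u * eb b) / 4 + (∑' k : ℕ,
        ((if ε k then (1 : ℝ) else 0) + u * (if ε' k then (1 : ℝ) else 0)) / 4 ^ (k+1)) / 4 := by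
        rw [tsum_div_const]
    _ = (Smap u (ε, ε') + (eb a + u * eb b)) / 4 := by
        rw [Smap]; ring

/-- the self-similarity operator -/
def Tm (u : ℝ) (ν : Measure ℝ) : Measure ℝ :=
  (4⁻¹ : ℝ≥0∞) • (Measure.map (φm 0) ν + Measure.map (φm 1) ν
    + Measure.map (φm u) ν + Measure.map (φm (1+u)) ν)

lemma muBes_selfsim (u : ℝ) : muBes u = Tm u (muBes u) := by
  have hcomp : ∀ a b : Bool,
      Measure.map (Smap u) (Measure.map (pm a b) (bernoulliProd.prod bernoulliProd))
        = Measure.map (φm (eb a + u * eb b)) (muBes u) := by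
    intro a b
    rw [Measure.map_map (measurable_Smap u) (measurable_pm a b),
      show Smap u ∘ pm a b = φm (eb a + u * eb b) ∘ Smap u from
        funext fun εε' => Smap_comp u a b εε',
      ← Measure.map_map (measurable_φm _) (measurable_Smap u), muBes_def]
  have h0 : eb false + u * eb false = 0 := by simp [eb]
  have h1 : eb true + u * eb false = 1 := by simp [eb]
  have hu : eb false + u * eb true = u := by simp [eb]
  have h1u : eb true + u * eb true = 1 + u := by simp [eb]
  rw [Tm, muBes_def]
  nth_rewrite 1 [prod_split]
  rw [Measure.map_smul, Measure.map_add _ _ (measurable_Smap u),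
    Measure.map_add _ _ (measurable_Smap u), Measure.map_add _ _ (measurable_Smap u),
    hcomp, hcomp, hcomp, hcomp, h0, h1, hu, h1u, muBes_def]

lemma norm_expI (t x : ℝ) : ‖Complex.exp (Complex.I * t * x)‖ = 1 := by
  rw [Complex.norm_exp]
  have : (Complex.I * t * x).re = 0 := by simp
  rw [this, Real.exp_zero]

lemma continuous_expI (t : ℝ) : Continuous fun x : ℝ => Complex.exp (Complex.I * t * x) :=
  Complex.continuous_exp.comp (by continuity)

lemma integrable_expI (ν : Measure ℝ) [IsFiniteMeasure ν] (t : ℝ) :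
    Integrable (fun x : ℝ => Complex.exp (Complex.I * t * x)) ν := by
  refine Integrable.mono' (integrable_const (1:ℝ)) (continuous_expI t).aestronglyMeasurable ?_
  exact Filter.Eventually.of_forall fun x => le_of_eq (norm_expI t x)

/-- the multiplier in the functional equation -/
def wf (u t : ℝ) : ℂ :=
  (4:ℂ)⁻¹ * ((1 + Complex.exp (Complex.I * t)) * (1 + Complex.exp (Complex.I * t * u)))

lemma fourier_FE (u : ℝ) (ν : Measure ℝ) [IsFiniteMeasure ν] (hν : ν = Tm u ν) (t : ℝ) :
    fourierMeasure ν (4 * t) = wf u t * fourierMeasure ν t := by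
  haveI h0 : IsFiniteMeasure (Measure.map (φm 0) ν) := Measure.isFiniteMeasure_map ν _
  haveI h1 : IsFiniteMeasure (Measure.map (φm 1) ν) := Measure.isFiniteMeasure_map ν _
  haveI h2 : IsFiniteMeasure (Measure.map (φm u) ν) := Measure.isFiniteMeasure_map ν _
  haveI h3 : IsFiniteMeasure (Measure.map (φm (1+u)) ν) := Measure.isFiniteMeasure_map ν _
  have hmapint : ∀ d : ℝ, ∀ μ' : Measure ℝ, IsFiniteMeasure μ' →
      ∫ x, Complex.exp (Complex.I * (4*t : ℝ) * x) ∂(Measure.map (φm d) μ')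
        = Complex.exp (Complex.I * t * d) * fourierMeasure μ' t := by
    intro d μ' hfin
    rw [integral_map (measurable_φm d).aemeasurable (continuous_expI (4*t)).aestronglyMeasurable]
    have key : ∀ x : ℝ, Complex.exp (Complex.I * (4*t : ℝ) * (φm d x : ℝ))
        = Complex.exp (Complex.I * t * d) * Complex.exp (Complex.I * t * x) := by
      intro x
      rw [← Complex.exp_add]
      congr 1
      simp only [φm]
      push_cast
      ring
    simp_rw [key]
    rw [integral_const_mul]
    rfl
  have lhs_eq : fourierMeasure ν (4 * t)
      = (4⁻¹ : ℝ≥0∞).toReal • (Complex.exp (Complex.I * t * (0:ℝ)) * fourierMeasure ν t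
        + Complex.exp (Complex.I * t * (1:ℝ)) * fourierMeasure ν t
        + Complex.exp (Complex.I * t * u) * fourierMeasure ν t
        + Complex.exp (Complex.I * t * ((1:ℝ)+u)) * fourierMeasure ν t) := by
    rw [fourierMeasure]
    conv_lhs => rw [hν]
    rw [Tm, integral_smul_measure,
      integral_add_measure (((integrable_expI _ _).add_measure (integrable_expI _ _)).add_measure
        (integrable_expI _ _)) (integrable_expI _ _),
      integral_add_measure ((integrable_expI _ _).add_measure (integrable_expI _ _))
        (integrable_expI _ _),
      integral_add_measure (integrable_expI _ _) (integrable_expI _ _)]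
    rw [hmapint 0 ν inferInstance, hmapint 1 ν inferInstance, hmapint u ν inferInstance,
      hmapint (1+u) ν inferInstance]
    push_cast
    ring_nf
  rw [lhs_eq]
  have htr : (4⁻¹ : ℝ≥0∞).toReal = (4⁻¹ : ℝ) := by
    rw [ENNReal.toReal_inv]; norm_num
  rw [htr]
  have hexp : Complex.exp (Complex.I * t * ((1:ℝ)+u))
      = Complex.exp (Complex.I * t) * Complex.exp (Complex.I * t * u) := by
    rw [← Complex.exp_add]; push_cast; ring
  rw [hexp, wf]
  push_cast
  simp only [Complex.ofReal_zero, mul_zero, Complex.exp_zero, Complex.ofReal_one, mul_one]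
  rw [Complex.real_smul]
  push_cast
  ring

lemma tendsto_fourier_at_zero (ν : Measure ℝ) [IsFiniteMeasure ν] (t : ℝ) :
    Tendsto (fun n : ℕ => fourierMeasure ν (t / 4 ^ n)) atTop
      (nhds (((ν Set.univ).toReal : ℝ) : ℂ)) := by
  have hlim : ∀ x : ℝ, Tendsto (fun n : ℕ => Complex.exp (Complex.I * (t / 4 ^ n : ℝ) * x))
      atTop (nhds 1) := by
    intro x
    have h1 : Tendsto (fun n : ℕ => (t / 4 ^ n : ℝ)) atTop (nhds 0) := by
      have h2 : (fun n : ℕ => (t / 4 ^ n : ℝ)) = fun n : ℕ => t * (4⁻¹ : ℝ) ^ n := by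
        funext n; rw [div_eq_mul_inv, inv_pow]
      rw [h2]
      have := (tendsto_pow_atTop_nhds_zero_of_lt_one (by norm_num : (0:ℝ) ≤ 4⁻¹)
        (by norm_num : (4⁻¹:ℝ) < 1)).const_mul t
      simpa using this
    have hcont : Continuous fun s : ℝ => Complex.exp (Complex.I * s * x) :=
      Complex.continuous_exp.comp (by continuity)
    have := (hcont.tendsto 0).comp h1
    simpa [Function.comp_def, Complex.ofReal_div, Complex.ofReal_pow, Complex.ofReal_ofNat] using this
  have := tendsto_integral_of_dominated_convergence (F := fun n (x:ℝ) =>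
      Complex.exp (Complex.I * (t / 4 ^ n : ℝ) * x)) (f := fun _ : ℝ => (1:ℂ))
      (bound := fun _ : ℝ => (1:ℝ)) (μ := ν)
      (fun n => (continuous_expI _).aestronglyMeasurable)
      (integrable_const 1)
      (fun n => Filter.Eventually.of_forall fun x => le_of_eq (norm_expI _ x))
      (Filter.Eventually.of_forall hlim)
  have hval : (∫ _x : ℝ, (1:ℂ) ∂ν) = (((ν Set.univ).toReal : ℝ) : ℂ) := by
    rw [integral_const, Complex.real_smul, mul_one]; rfl
  rw [hval] at this
  exact this

lemma fourier_iterate (u : ℝ) (F : ℝ → ℂ) (hFE : ∀ t, F (4 * t) = wf u t * F t) (s : ℝ) :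
    ∀ n : ℕ, F s = (∏ j ∈ Finset.range n, wf u (s / 4 ^ (j+1))) * F (s / 4 ^ n) := by
  intro n
  induction n with
  | zero => simp
  | succ n ih =>
    have h4 : 4 * (s / 4 ^ (n+1)) = s / 4 ^ n := by
      rw [pow_succ]
      field_simp
    have := hFE (s / 4 ^ (n+1))
    rw [h4] at this
    rw [ih, this, Finset.prod_range_succ]
    ring

lemma fourier_ratio (u : ℝ) (F G : ℝ → ℂ) (hF : ∀ t, F (4 * t) = wf u t * F t)
    (hG : ∀ t, G (4 * t) = wf u t * G t) {s : ℝ} {a b : ℂ}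
    (ha : Tendsto (fun n : ℕ => F (s / 4 ^ n)) atTop (nhds a))
    (hb : Tendsto (fun n : ℕ => G (s / 4 ^ n)) atTop (nhds b)) :
    F s * b = G s * a := by
  have h : ∀ n : ℕ, F s * G (s / 4 ^ n) = G s * F (s / 4 ^ n) := by
    intro n
    rw [fourier_iterate u F hF s n, fourier_iterate u G hG s n]
    ring
  have l1 : Tendsto (fun n : ℕ => F s * G (s / 4 ^ n)) atTop (nhds (F s * b)) := hb.const_mul _
  have l2 : Tendsto (fun n : ℕ => G s * F (s / 4 ^ n)) atTop (nhds (G s * a)) := ha.const_mul _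
  exact tendsto_nhds_unique (l1.congr h) l2

lemma two_pow_mul_odd_inj : ∀ s t r k : ℕ, Odd r → Odd k → 2 ^ s * r = 2 ^ t * k → s = t := by
  intro s
  induction s with
  | zero =>
    intro t r k hr hk h
    cases t with
    | zero => rfl
    | succ t =>
      exfalso
      obtain ⟨m, hm⟩ := hr
      have h2 : r = 2 * (2 ^ t * k) := by rw [pow_succ, pow_zero, one_mul] at h; rw [h]; ring
      omega
  | succ s ih =>
    intro t r k hr hk h
    cases t with
    | zero =>
      exfalso
      obtain ⟨m, hm⟩ := hk
      have h2 : k = 2 * (2 ^ s * r) := by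
        rw [pow_succ, pow_zero, one_mul] at h; rw [← h]; ring
      omega
    | succ t =>
      have h2 : 2 * (2 ^ s * r) = 2 * (2 ^ t * k) := by
        rw [pow_succ, pow_succ] at h; ring_nf at h ⊢; omega
      exact congrArg Nat.succ (ih t r k hr hk (by omega))

lemma odd_decomp (m : ℕ) (hm' : Odd (fstDigit 4 m)) :
    ∃ a r : ℕ, m = 4 ^ a * r ∧ Odd r := by
  refine ⟨padicValNat 4 m, m / 4 ^ padicValNat 4 m,
    (Nat.mul_div_cancel' pow_padicValNat_dvd).symm, ?_⟩
  rw [fstDigit] at hm'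
  obtain ⟨k, hk⟩ := hm'
  rw [Nat.odd_iff]
  have h2 : m / 4 ^ padicValNat 4 m % 2 = m / 4 ^ padicValNat 4 m % 4 % 2 :=
    (Nat.mod_mod_of_dvd _ (by norm_num)).symm
  omega

lemma factor_ne (m : ℕ) (hm : 0 < m) (hm' : Odd (fstDigit 4 m)) (j : ℕ) (t : ℝ)
    (ht : t = 2 * Real.pi * m / 4 ^ (j+1)) :
    (1 : ℂ) + Complex.exp (Complex.I * t) ≠ 0 := by
  intro h
  have hexp : Complex.exp (Complex.I * t) = -1 := by linear_combination h
  have h1 : Complex.exp (Complex.I * t + Real.pi * Complex.I) = 1 := by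
    rw [Complex.exp_add, hexp, Complex.exp_pi_mul_I]; ring
  rw [Complex.exp_eq_one_iff] at h1
  obtain ⟨n, hn⟩ := h1
  -- take imaginary parts
  have him : t + Real.pi = n * (2 * Real.pi) := by
    have := congrArg Complex.im hn
    simpa using this
  rw [ht] at him
  have hpi : Real.pi ≠ 0 := Real.pi_ne_zero
  have h4 : ((4:ℝ) ^ (j+1)) ≠ 0 := by positivity
  have h5 : Real.pi * (2 * (m:ℝ) + 4 ^ (j+1)) = Real.pi * ((n:ℝ) * 2 * 4 ^ (j+1)) := by
    field_simp at him
    linear_combination Real.pi * him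
  have h6 := mul_left_cancel₀ hpi h5
  have hreal : (2 * (m:ℝ)) = 4 ^ (j+1) * (2 * (n:ℝ) - 1) := by linarith [h6]
  have hz : (2 * (m:ℤ)) = 4 ^ (j+1) * (2 * n - 1) := by
    have : ((2 * (m:ℤ) : ℤ) : ℝ) = ((4 ^ (j+1) * (2 * n - 1) : ℤ) : ℝ) := by
      push_cast
      linarith [hreal]
    exact_mod_cast this
  have hpos : (0:ℤ) < 2 * n - 1 := by
    have h4p : (0:ℤ) < 4 ^ (j+1) := by positivity
    nlinarith [hz, hm]
  obtain ⟨nn, hnn⟩ : ∃ nn : ℕ, (2 * n - 1 : ℤ) = (2 * nn + 1 : ℕ) := by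
    refine ⟨(n - 1).toNat, ?_⟩
    push_cast
    omega
  have hnat : 2 * m = 4 ^ (j+1) * (2 * nn + 1) := by
    have : (2 * m : ℤ) = ((4 ^ (j+1) * (2 * nn + 1) : ℕ) : ℤ) := by
      rw [hz, hnn]; push_cast; ring
    exact_mod_cast this
  obtain ⟨a, r, hmar, hrodd⟩ := odd_decomp m hm'
  have h2m : 2 ^ (2 * a + 1) * r = 2 ^ (2 * (j+1)) * (2 * nn + 1) := by
    have e1 : 2 * m = 2 ^ (2 * a + 1) * r := by
      rw [hmar, show (4:ℕ) = 2 ^ 2 by norm_num, ← pow_mul, pow_succ]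
      ring
    have e2 : (4:ℕ) ^ (j+1) = 2 ^ (2 * (j+1)) := by
      rw [show (4:ℕ) = 2 ^ 2 by norm_num, ← pow_mul]
    rw [← e1, hnat, e2]
  have := two_pow_mul_odd_inj (2 * a + 1) (2 * (j+1)) r (2 * nn + 1) hrodd ⟨nn, by ring⟩ h2m
  omega

lemma wf_eq_one (p q : ℕ) (hq : 0 < q) (k : ℕ) :
    wf ((p:ℝ)/q) (2 * Real.pi * q * 4 ^ k) = 1 := by
  have hqr : ((q:ℝ)) ≠ 0 := Nat.cast_ne_zero.2 hq.ne'
  have e1 : Complex.exp (Complex.I * ((2 * Real.pi * q * 4 ^ k : ℝ) : ℂ)) = 1 := by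
    have h : (Complex.I * ((2 * Real.pi * q * 4 ^ k : ℝ) : ℂ))
        = ((q * 4 ^ k : ℤ) : ℂ) * (2 * Real.pi * Complex.I) := by push_cast; ring
    rw [h, Complex.exp_int_mul_two_pi_mul_I]
  have e2 : Complex.exp (Complex.I * ((2 * Real.pi * q * 4 ^ k : ℝ):ℂ) * (((p:ℝ)/q : ℝ):ℂ)) = 1 := by
    have hre : (2 * Real.pi * q * 4 ^ k : ℝ) * ((p:ℝ)/q) = 2 * Real.pi * p * 4 ^ k := by
      field_simp
    have h : Complex.I * ((2 * Real.pi * q * 4 ^ k : ℝ):ℂ) * (((p:ℝ)/q : ℝ):ℂ)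
        = ((p * 4 ^ k : ℤ):ℂ) * (2 * Real.pi * Complex.I) := by
      rw [mul_assoc, ← Complex.ofReal_mul, hre]; push_cast; ring
    rw [h, Complex.exp_int_mul_two_pi_mul_I]
  rw [wf, e1, e2]
  norm_num

lemma wf_ne_zero (p q : ℕ) (hp : 0 < p) (hq : 0 < q) (hp' : Odd (fstDigit 4 p))
    (hq' : Odd (fstDigit 4 q)) (j : ℕ) :
    wf ((p:ℝ)/q) (2 * Real.pi * q / 4 ^ (j+1)) ≠ 0 := by
  have hqr : ((q:ℝ)) ≠ 0 := Nat.cast_ne_zero.2 hq.ne'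
  rw [wf]
  refine mul_ne_zero (by norm_num) (mul_ne_zero ?_ ?_)
  · exact factor_ne q hq hq' j _ rfl
  · have hster : (2 * Real.pi * q / 4 ^ (j+1) : ℝ) * ((p:ℝ)/q)
        = 2 * Real.pi * p / 4 ^ (j+1) := by field_simp
    have h : Complex.I * ((2 * Real.pi * q / 4 ^ (j+1) : ℝ):ℂ) * (((p:ℝ)/q : ℝ):ℂ)
        = Complex.I * ((2 * Real.pi * p / 4 ^ (j+1) : ℝ):ℂ) := by
      rw [mul_assoc, ← Complex.ofReal_mul, hster]
    rw [h]
    exact factor_ne p hp hp' j _ rfl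

lemma fourier_const (p q : ℕ) (hq : 0 < q) :
    ∀ k : ℕ, fourierMeasure (muBes ((p:ℝ)/q)) (2 * Real.pi * q * 4 ^ k)
      = fourierMeasure (muBes ((p:ℝ)/q)) (2 * Real.pi * q) := by
  have hFE := fourier_FE ((p:ℝ)/q) (muBes ((p:ℝ)/q)) (muBes_selfsim ((p:ℝ)/q))
  intro k
  induction k with
  | zero => norm_num
  | succ k ih =>
    have h4 : (2 * Real.pi * q * 4 ^ (k+1) : ℝ) = 4 * (2 * Real.pi * q * 4 ^ k) := by ring
    rw [h4, hFE, wf_eq_one p q hq k, one_mul, ih]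

lemma fourier_ne_zero (p q : ℕ) (hp : 0 < p) (hq : 0 < q) (hp' : Odd (fstDigit 4 p))
    (hq' : Odd (fstDigit 4 q)) :
    fourierMeasure (muBes ((p:ℝ)/q)) (2 * Real.pi * q) ≠ 0 := by
  have hFE := fourier_FE ((p:ℝ)/q) (muBes ((p:ℝ)/q)) (muBes_selfsim ((p:ℝ)/q))
  intro h0
  have hlim : Tendsto (fun n : ℕ => fourierMeasure (muBes ((p:ℝ)/q)) ((2*Real.pi*q) / 4 ^ n))
      atTop (nhds 1) := by
    have := tendsto_fourier_at_zero (muBes ((p:ℝ)/q)) (2*Real.pi*q)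
    rw [measure_univ] at this
    simpa using this
  obtain ⟨n, hn⟩ := (hlim.eventually_ne one_ne_zero).exists
  have hit := fourier_iterate ((p:ℝ)/q) (fourierMeasure (muBes ((p:ℝ)/q))) hFE (2*Real.pi*q) n
  rw [h0] at hit
  have hP : (∏ j ∈ Finset.range n, wf ((p:ℝ)/q) ((2*Real.pi*q) / 4 ^ (j+1))) ≠ 0 :=
    Finset.prod_ne_zero_iff.2 fun j _ => wf_ne_zero p q hp hq hp' hq' j
  exact (mul_ne_zero hP hn) hit.symm

end
end BesAux

open scoped ENNReal NNReal Topology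

/-- If `u = p/q` with `p, q` positive coprime and both `p*`, `q*` odd, then
`limsup_{t→∞} |μ̂_u(t)| > 0`; in particular `μ̂_u` does not tend to `0` at infinity, and
`μ_u` is singular with respect to Lebesgue measure. -/
theorem limsup_fourier_muBes_pos_of_odd_odd (p q : ℕ) (hp : 0 < p) (hq : 0 < q)
    (hpq : Nat.Coprime p q) (hp' : Odd (fstDigit 4 p)) (hq' : Odd (fstDigit 4 q)) :
    0 < limsup (fun t : ℝ => ‖fourierMeasure (muBes ((p : ℝ) / q)) t‖) atTop ∧
    ¬ Tendsto (fourierMeasure (muBes ((p : ℝ) / q))) atTop (nhds 0) ∧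
    (muBes ((p : ℝ) / q)).MutuallySingular volume := by
  classical
  have hFE := BesAux.fourier_FE ((p:ℝ)/q) (muBes ((p:ℝ)/q)) (BesAux.muBes_selfsim ((p:ℝ)/q))
  have hconst := BesAux.fourier_const p q hq
  have hcne := BesAux.fourier_ne_zero p q hp hq hp' hq'
  have hqpos : (0:ℝ) < q := by exact_mod_cast hq
  have h2πq : (0:ℝ) < 2 * Real.pi * q := by positivity
  have hseq : Tendsto (fun k : ℕ => 2 * Real.pi * q * 4 ^ k) atTop atTop :=
    Tendsto.const_mul_atTop h2πq (tendsto_pow_atTop_atTop_of_one_lt (by norm_num : (1:ℝ) < 4))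
  have hb : ∀ t : ℝ, ‖fourierMeasure (muBes ((p:ℝ)/q)) t‖ ≤ 1 := by
    intro t
    rw [fourierMeasure]
    calc ‖∫ x, Complex.exp (Complex.I*t*x) ∂(muBes ((p:ℝ)/q))‖
        ≤ 1 * ((muBes ((p:ℝ)/q)) Set.univ).toReal :=
          norm_integral_le_of_norm_le_const
            (Filter.Eventually.of_forall fun x => le_of_eq (BesAux.norm_expI t x))
      _ = 1 := by rw [measure_univ]; norm_num
  refine ⟨?_, ?_, ?_⟩
  · -- limsup positive
    have hfreq : ∃ᶠ t in atTop,
        ‖fourierMeasure (muBes ((p:ℝ)/q)) (2*Real.pi*q)‖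
          ≤ ‖fourierMeasure (muBes ((p:ℝ)/q)) t‖ := by
      rw [Filter.frequently_atTop]
      intro b
      obtain ⟨k, hk⟩ := (hseq.eventually_ge_atTop b).exists
      exact ⟨2*Real.pi*q*4^k, hk, by rw [hconst k]⟩
    have hbdd : IsBoundedUnder (· ≤ ·) atTop
        (fun t : ℝ => ‖fourierMeasure (muBes ((p:ℝ)/q)) t‖) :=
      Filter.isBoundedUnder_of ⟨1, hb⟩
    exact lt_of_lt_of_le (norm_pos_iff.2 hcne) (le_limsup_of_frequently_le hfreq hbdd)
  · -- not tendsto 0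
    intro hT
    have h2 : Tendsto (fun k : ℕ => fourierMeasure (muBes ((p:ℝ)/q)) (2*Real.pi*q*4^k))
        atTop (nhds 0) := hT.comp hseq
    have h3 : Tendsto (fun _ : ℕ => fourierMeasure (muBes ((p:ℝ)/q)) (2*Real.pi*q))
        atTop (nhds 0) := h2.congr fun k => hconst k
    exact hcne (tendsto_nhds_unique tendsto_const_nhds h3)
  · -- mutually singular
    set μ := muBes ((p:ℝ)/q) with hμdef
    set σ := μ.singularPart volume with hσdef
    set ρ := volume.withDensity (μ.rnDeriv volume) with hρdef
    have hadd : σ + ρ = μ := (μ.haveLebesgueDecomposition_add volume).symm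
    haveI hρfin : IsFiniteMeasure ρ := by
      constructor
      have h1 : ρ Set.univ ≤ μ Set.univ := by
        rw [← hadd, Measure.add_apply]; exact le_add_self
      exact lt_of_le_of_lt h1 (measure_lt_top μ _)
    haveI hσfin : IsFiniteMeasure σ := by
      constructor
      have h1 : σ Set.univ ≤ μ Set.univ := by
        rw [← hadd, Measure.add_apply]; exact le_self_add
      exact lt_of_le_of_lt h1 (measure_lt_top μ _)
    have hemb : ∀ d : ℝ, MeasurableEmbedding (BesAux.φm d) := by
      intro d
      have h1 : BesAux.φm d
          = ⇑((Homeomorph.addRight d).trans (Homeomorph.mulRight₀ (4⁻¹:ℝ) (by norm_num))) := by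
        funext x
        simp [BesAux.φm, div_eq_mul_inv, Homeomorph.trans]; rfl
      rw [h1]
      exact (Homeomorph.measurableEmbedding _)
    have hmapvol : ∀ d : ℝ,
        Measure.map (BesAux.φm d) volume = ENNReal.ofReal 4 • volume := by
      intro d
      have h1 : BesAux.φm d = (fun y : ℝ => y * 4⁻¹) ∘ (fun x : ℝ => x + d) := by
        funext x; simp [BesAux.φm, div_eq_mul_inv]
      rw [h1, ← Measure.map_map (measurable_id'.mul_const 4⁻¹ : Measurable fun y:ℝ => y * 4⁻¹)
        (measurable_id'.add_const d : Measurable fun x:ℝ => x + d),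
        map_add_right_eq_self volume d,
        Real.map_volume_mul_right (by norm_num : (4⁻¹:ℝ) ≠ 0)]
      norm_num
    have hac_vol : volume ≪ (ENNReal.ofReal 4 • (volume : Measure ℝ)) := by
      intro s hs
      rw [Measure.smul_apply, smul_eq_mul, mul_eq_zero] at hs
      rcases hs with h | h
      · exfalso; rw [ENNReal.ofReal_eq_zero] at h; linarith
      · exact h
    have hvol_ac : (ENNReal.ofReal 4 • (volume : Measure ℝ)) ≪ volume := by
      intro s hs
      rw [Measure.smul_apply, smul_eq_mul, hs, mul_zero]
    have hsm : ∀ d : ℝ, (Measure.map (BesAux.φm d) σ).MutuallySingular volume := by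
      intro d
      have h1 := (hemb d).mutuallySingular_map (Measure.mutuallySingular_singularPart μ volume)
      refine h1.mono_ac (Measure.AbsolutelyContinuous.refl _) ?_
      rw [hmapvol d]
      exact hac_vol
    have hTσ_sing : (BesAux.Tm ((p:ℝ)/q) σ).MutuallySingular volume := by
      rw [BesAux.Tm]
      exact ((((hsm 0).add_left (hsm 1)).add_left (hsm _)).add_left (hsm _)).smul _
    have hac_map : ∀ d : ℝ, (Measure.map (BesAux.φm d) ρ) ≪ volume := by
      intro d
      have h1 : ρ ≪ volume := withDensity_absolutelyContinuous _ _
      have h2 := h1.map (BesAux.measurable_φm d)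
      rw [hmapvol d] at h2
      exact h2.trans hvol_ac
    have hTρ_ac : (BesAux.Tm ((p:ℝ)/q) ρ) ≪ volume := by
      intro s hs
      simp [BesAux.Tm, Measure.smul_apply, Measure.add_apply,
        hac_map 0 hs, hac_map 1 hs, hac_map _ hs]
    haveI hTρfin : IsFiniteMeasure (BesAux.Tm ((p:ℝ)/q) ρ) := by
      constructor
      have hbm : ∀ d : ℝ, Measure.map (BesAux.φm d) ρ Set.univ < ⊤ := by
        intro d
        rw [Measure.map_apply (BesAux.measurable_φm d) MeasurableSet.univ]
        exact measure_lt_top ρ _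
      rw [BesAux.Tm, Measure.smul_apply, Measure.add_apply, Measure.add_apply,
        Measure.add_apply, smul_eq_mul]
      exact ENNReal.mul_lt_top (by norm_num)
        (ENNReal.add_lt_top.2 ⟨ENNReal.add_lt_top.2 ⟨ENNReal.add_lt_top.2
          ⟨hbm 0, hbm 1⟩, hbm _⟩, hbm _⟩)
    have hTρ_eq : volume.withDensity ((BesAux.Tm ((p:ℝ)/q) ρ).rnDeriv volume)
        = BesAux.Tm ((p:ℝ)/q) ρ :=
      Measure.withDensity_rnDeriv_eq _ _ hTρ_ac
    have hT_add : BesAux.Tm ((p:ℝ)/q) (σ + ρ)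
        = BesAux.Tm ((p:ℝ)/q) σ + BesAux.Tm ((p:ℝ)/q) ρ := by
      simp only [BesAux.Tm, Measure.map_add _ _ (BesAux.measurable_φm _), smul_add]
      abel
    have hμ_eq : μ = BesAux.Tm ((p:ℝ)/q) σ
        + volume.withDensity ((BesAux.Tm ((p:ℝ)/q) ρ).rnDeriv volume) := by
      rw [hTρ_eq]
      conv_lhs => rw [show μ = BesAux.Tm ((p:ℝ)/q) μ from BesAux.muBes_selfsim ((p:ℝ)/q)]
      rw [← hadd, hT_add]
    have hσT : BesAux.Tm ((p:ℝ)/q) σ = σ := by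
      have h1 := Measure.eq_singularPart (Measure.measurable_rnDeriv _ _) hTσ_sing hμ_eq
      rw [h1, hσdef]
    have hFEσ := BesAux.fourier_FE ((p:ℝ)/q) σ hσT.symm
    have hFμρσ : ∀ t : ℝ, fourierMeasure μ t = fourierMeasure σ t + fourierMeasure ρ t := by
      intro t
      rw [fourierMeasure, ← hadd,
        integral_add_measure (BesAux.integrable_expI σ t) (BesAux.integrable_expI ρ t)]
      rfl
    have hFEρ : ∀ t : ℝ, fourierMeasure ρ (4*t)
        = BesAux.wf ((p:ℝ)/q) t * fourierMeasure ρ t := by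
      intro t
      have h1 := hFE t
      have h2 := hFEσ t
      have h3 := hFμρσ (4*t)
      have h4 := hFμρσ t
      linear_combination h1 - h2 - h3 + BesAux.wf ((p:ℝ)/q) t * h4
    have hρratio : ∀ s : ℝ, fourierMeasure ρ s
        = ((ρ Set.univ).toReal : ℂ) * fourierMeasure μ s := by
      intro s
      have ha := BesAux.tendsto_fourier_at_zero ρ s
      have hbb := BesAux.tendsto_fourier_at_zero μ s
      rw [measure_univ] at hbb
      have hb1 : Tendsto (fun n : ℕ => fourierMeasure μ (s/4^n)) atTop (nhds 1) := by
        simpa using hbb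
      have hr := BesAux.fourier_ratio ((p:ℝ)/q) (fourierMeasure ρ) (fourierMeasure μ)
        hFEρ hFE ha hb1
      rw [mul_one] at hr
      rw [hr, mul_comm]
    have hRL : Tendsto (fourierMeasure ρ) atTop (nhds 0) := by
      set f' : ℝ → ℝ≥0 := fun x => (μ.rnDeriv volume x).toNNReal with hf'
      have hf'meas : Measurable f' := (Measure.measurable_rnDeriv μ volume).ennreal_toNNReal
      have hρ' : ρ = volume.withDensity (fun x => (f' x : ℝ≥0∞)) := by
        rw [hρdef]
        apply withDensity_congr_ae
        filter_upwards [Measure.rnDeriv_lt_top μ volume] with x hx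
        exact (ENNReal.coe_toNNReal hx.ne).symm
      set g : ℝ → ℂ := fun x => ((f' x : ℝ) : ℂ) with hg
      have heval : ∀ t : ℝ, fourierMeasure ρ t
          = ∫ v : ℝ, (Real.fourierChar (-(v * (-t/(2*Real.pi))))) • g v := by
        intro t
        rw [fourierMeasure, hρ', integral_withDensity_eq_integral_smul hf'meas]
        refine integral_congr_ae (Filter.Eventually.of_forall fun v => ?_)
        show f' v • Complex.exp (Complex.I * t * v)
          = Real.fourierChar (-(v * (-t/(2*Real.pi)))) • g v
        rw [Circle.smul_def, Real.fourierChar_apply, hg]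
        have harg : (2 * Real.pi * (-(v * (-t/(2*Real.pi))))) = v * t := by
          field_simp
        rw [harg]
        have hsmul : (f' v : ℝ≥0) • Complex.exp (Complex.I * t * v)
            = ((f' v : ℝ) : ℂ) * Complex.exp (Complex.I * t * v) := by
          rw [NNReal.smul_def, Complex.real_smul]
        rw [hsmul]
        have hexp : Complex.exp (Complex.I * t * v) = Complex.exp (((v * t : ℝ):ℂ) * Complex.I) := by
          congr 1; push_cast; ring
        rw [hexp, smul_eq_mul]
        ring
      have hH := Real.tendsto_integral_exp_smul_cocompact g
      have hcomp : Tendsto (fun t : ℝ => -t/(2*Real.pi)) atTop (cocompact ℝ) := by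
        have h1 : Tendsto (fun t : ℝ => t/(2*Real.pi)) atTop atTop :=
          tendsto_id.atTop_div_const (by positivity)
        have h2 : Tendsto (fun t : ℝ => -(t/(2*Real.pi))) atTop atBot :=
          tendsto_neg_atTop_atBot.comp h1
        rw [cocompact_eq_atBot_atTop]
        exact (h2.congr fun t => (neg_div _ _).symm).mono_right le_sup_left
      have := hH.comp hcomp
      exact this.congr fun t => (heval t).symm
    have hlim0 : Tendsto (fun k : ℕ => fourierMeasure ρ (2*Real.pi*q*4^k)) atTop (nhds 0) :=
      hRL.comp hseq
    have hconst2 : ∀ k : ℕ, fourierMeasure ρ (2*Real.pi*q*4^k)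
        = ((ρ Set.univ).toReal : ℂ) * fourierMeasure μ (2*Real.pi*q) := by
      intro k
      rw [hρratio, hconst k]
    have hzero : ((ρ Set.univ).toReal : ℂ) * fourierMeasure μ (2*Real.pi*q) = 0 :=
      (tendsto_nhds_unique (hlim0.congr hconst2) tendsto_const_nhds).symm
    have hm0 : ((ρ Set.univ).toReal : ℂ) = 0 := by
      rcases mul_eq_zero.1 hzero with h | h
      · exact h
      · exact absurd h hcne
    have huniv : ρ Set.univ = 0 := by
      have h1 : (ρ Set.univ).toReal = 0 := by exact_mod_cast hm0
      have hne : ρ Set.univ ≠ ⊤ := measure_ne_top ρ _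
      rcases (ENNReal.toReal_eq_zero_iff _).1 h1 with h | h
      · exact h
      · exact absurd h hne
    have hρ0 : ρ = 0 := Measure.measure_univ_eq_zero.1 huniv
    rw [← hadd, hρ0, add_zero]
    exact Measure.mutuallySingular_singularPart μ volume
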